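/- Let W be a Whitney decomposition of an open set O ⊊ ℝⁿ into axis-parallel dyadic cubes with pairwise disjoint interiors such that diam Q ≤ dist(Q, ∂O) ≤ 4 diam Q for all Q ∈ W. Then whenever two cubes Q, R ∈ W have intersecting closures, (1/4) diam Q ≤ diam R ≤ 4 diam Q, and each cube Q ∈ W has at most 12ⁿ cubes in W whose closures intersect its closure. -/

import Mathlib

open Metric Set

/-- Distance between two sets. -/
noncomputable def setDist {α : Type*} [PseudoMetricSpace α] (s t : Set α) : ℝ :=
  sInf (Set.image2 dist s t)

/-- The closed dyadic cube `2^{-k}(m + [0,1]ⁿ)`. -/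
def dyadicCube (n : ℕ) (k : ℤ) (m : Fin n → ℤ) : Set (EuclideanSpace ℝ (Fin n)) :=
  {x | ∀ i, (m i : ℝ) * (2 : ℝ) ^ (-k) ≤ x i ∧ x i ≤ ((m i : ℝ) + 1) * (2 : ℝ) ^ (-k)}

lemma dc_closed (n : ℕ) (k : ℤ) (m : Fin n → ℤ) : IsClosed (dyadicCube n k m) := by
  have : dyadicCube n k m =
      ⋂ i, (fun x : EuclideanSpace ℝ (Fin n) => x i) ⁻¹'
        Icc ((m i : ℝ) * (2 : ℝ) ^ (-k)) (((m i : ℝ) + 1) * (2 : ℝ) ^ (-k)) := by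
    ext x; simp [dyadicCube, Set.mem_iInter, Set.mem_Icc]
  rw [this]
  exact isClosed_iInter fun i => IsClosed.preimage ((continuous_apply i).comp (PiLp.continuous_ofLp 2 _)) isClosed_Icc

lemma dc_lo_mem (n : ℕ) (k : ℤ) (m : Fin n → ℤ) :
    (WithLp.toLp 2 (fun i => (m i : ℝ) * (2 : ℝ) ^ (-k)) : EuclideanSpace ℝ (Fin n)) ∈ dyadicCube n k m := by
  intro i
  simp only [PiLp.toLp_apply]
  have : (0:ℝ) < (2:ℝ) ^ (-k) := by positivity
  exact ⟨le_refl _, by nlinarith⟩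

lemma dc_hi_mem (n : ℕ) (k : ℤ) (m : Fin n → ℤ) :
    (WithLp.toLp 2 (fun i => ((m i : ℝ) + 1) * (2 : ℝ) ^ (-k)) : EuclideanSpace ℝ (Fin n)) ∈ dyadicCube n k m := by
  intro i
  simp only [PiLp.toLp_apply]
  have : (0:ℝ) < (2:ℝ) ^ (-k) := by positivity
  exact ⟨by nlinarith, le_refl _⟩

lemma dc_nonempty (n : ℕ) (k : ℤ) (m : Fin n → ℤ) : (dyadicCube n k m).Nonempty :=
  ⟨_, dc_lo_mem n k m⟩

lemma dc_dist_le {n : ℕ} {k : ℤ} {m : Fin n → ℤ} {x y : EuclideanSpace ℝ (Fin n)}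
    (hx : x ∈ dyadicCube n k m) (hy : y ∈ dyadicCube n k m) :
    dist x y ≤ Real.sqrt n * (2 : ℝ) ^ (-k) := by
  have hs : (0:ℝ) ≤ (2:ℝ) ^ (-k) := by positivity
  rw [EuclideanSpace.dist_eq]
  have hb : ∀ i, dist (x i) (y i) ^ 2 ≤ ((2:ℝ) ^ (-k)) ^ 2 := by
    intro i
    have h1 := hx i; have h2 := hy i
    rw [Real.dist_eq]
    have : |x i - y i| ≤ (2:ℝ)^(-k) := by
      rw [abs_le]; constructor <;> nlinarith [h1.1, h1.2, h2.1, h2.2]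
    nlinarith [abs_nonneg (x i - y i)]
  calc Real.sqrt (∑ i, dist (x i) (y i) ^ 2) ≤ Real.sqrt (∑ _i : Fin n, ((2:ℝ)^(-k))^2) := by
        apply Real.sqrt_le_sqrt
        exact Finset.sum_le_sum fun i _ => hb i
    _ = Real.sqrt n * (2 : ℝ) ^ (-k) := by
        rw [Finset.sum_const, Finset.card_univ, Fintype.card_fin, nsmul_eq_mul,
          Real.sqrt_mul (by positivity), Real.sqrt_sq hs]

lemma dc_bounded (n : ℕ) (k : ℤ) (m : Fin n → ℤ) : Bornology.IsBounded (dyadicCube n k m) :=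
  Metric.isBounded_iff.2 ⟨_, fun _ hx _ hy => dc_dist_le hx hy⟩

lemma dc_diam (n : ℕ) (k : ℤ) (m : Fin n → ℤ) :
    Metric.diam (dyadicCube n k m) = Real.sqrt n * (2 : ℝ) ^ (-k) := by
  refine le_antisymm (Metric.diam_le_of_forall_dist_le (by positivity)
    fun x hx y hy => dc_dist_le hx hy) ?_
  have key : ∀ x y : EuclideanSpace ℝ (Fin n), (∀ i, dist (x i) (y i) = (2:ℝ)^(-k)) →
      dist x y = Real.sqrt n * (2 : ℝ) ^ (-k) := by
    intro x y hxy
    rw [EuclideanSpace.dist_eq]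
    simp only [hxy]
    rw [Finset.sum_const, Finset.card_univ, Fintype.card_fin, nsmul_eq_mul,
      Real.sqrt_mul (by positivity), Real.sqrt_sq (by positivity)]
  have h := Metric.dist_le_diam_of_mem (dc_bounded n k m) (dc_lo_mem n k m) (dc_hi_mem n k m)
  rw [key _ _ ?_] at h
  · exact h
  · intro i
    simp only [Real.dist_eq]
    rw [show (m i : ℝ) * (2 : ℝ) ^ (-k) - ((m i : ℝ) + 1) * (2 : ℝ) ^ (-k) = -((2:ℝ)^(-k)) by ring,
      abs_neg, abs_of_nonneg (by positivity)]

lemma dc_interior_nonempty (n : ℕ) (k : ℤ) (m : Fin n → ℤ) :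
    (interior (dyadicCube n k m)).Nonempty := by
  set s : ℝ := (2:ℝ)^(-k) with hs
  have hs0 : 0 < s := by positivity
  set U : Set (EuclideanSpace ℝ (Fin n)) :=
    ⋂ i, (fun x : EuclideanSpace ℝ (Fin n) => x i) ⁻¹'
      Ioo ((m i : ℝ) * s) (((m i : ℝ) + 1) * s) with hU
  have hUopen : IsOpen U :=
    isOpen_iInter_of_finite fun i => IsOpen.preimage ((continuous_apply i).comp (PiLp.continuous_ofLp 2 _)) isOpen_Ioo
  have hUsub : U ⊆ dyadicCube n k m := by
    intro x hx i
    have := Set.mem_iInter.1 hx i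
    exact ⟨this.1.le, this.2.le⟩
  have hc : (WithLp.toLp 2 (fun i => (m i : ℝ) * s + s / 2) : EuclideanSpace ℝ (Fin n)) ∈ U := by
    refine Set.mem_iInter.2 fun i => ?_
    simp only [Set.mem_preimage, Set.mem_Ioo, PiLp.toLp_apply]
    constructor <;> nlinarith
  exact ⟨_, interior_maximal hUsub hUopen hc⟩

lemma setDist_le_triangle {α : Type*} [PseudoMetricSpace α] {Q R F : Set α} (hF : F.Nonempty)
    (hRb : Bornology.IsBounded R) {x : α} (hxQ : x ∈ Q) (hxR : x ∈ R) :
    setDist Q F ≤ Metric.diam R + setDist R F := by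
  refine le_of_forall_pos_le_add fun ε hε => ?_
  have hne : (Set.image2 dist R F).Nonempty := Set.Nonempty.image2 ⟨x, hxR⟩ hF
  obtain ⟨d, hd, hdlt⟩ := Real.lt_sInf_add_pos hne hε
  obtain ⟨r, hr, y, hy, rfl⟩ := hd
  have hbdd : BddBelow (Set.image2 dist Q F) := by
    refine ⟨0, fun z hz => ?_⟩
    obtain ⟨a, _, b, _, rfl⟩ := hz
    exact dist_nonneg
  have h1 : setDist Q F ≤ dist x y := csInf_le hbdd (Set.mem_image2_of_mem hxQ hy)
  have h2 : dist x y ≤ dist x r + dist r y := dist_triangle x r y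
  have h3 : dist x r ≤ Metric.diam R := Metric.dist_le_diam_of_mem hRb hxR hr
  have : setDist R F = sInf (Set.image2 dist R F) := rfl
  linarith

lemma dc_subcube {n : ℕ} {k k' : ℤ} {M m' : Fin n → ℤ} (hk : k' ≤ k + 2)
    {x : EuclideanSpace ℝ (Fin n)} (hxQ : x ∈ dyadicCube n k M) (hxR : x ∈ dyadicCube n k' m') :
    ∃ p : Fin n → ℤ, (∀ i, 4 * M i - 1 ≤ p i ∧ p i ≤ 4 * M i + 4) ∧
      dyadicCube n (k + 2) p ⊆ dyadicCube n k' m' := by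
  set t : ℕ := (k + 2 - k').toNat with ht
  have htz : (t : ℤ) = k + 2 - k' := Int.toNat_of_nonneg (by omega)
  have h2t' : (2:ℝ) ^ t = (2:ℝ) ^ (k + 2 - k') := by rw [← zpow_natCast (2:ℝ) t, htz]
  have hzadd : (2:ℝ) ^ (k + 2 - k') = (2:ℝ) ^ (k+2) * (2:ℝ) ^ (-k') := by
    rw [← zpow_add₀ (two_ne_zero)]; ring_nf
  have hzadd2 : (2:ℝ) ^ (k + 2 - k') * (2:ℝ) ^ (-(k+2)) = (2:ℝ) ^ (-k') := by
    rw [← zpow_add₀ (two_ne_zero)]; ring_nf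
  have h4 : (2:ℝ) ^ (-k) * (2:ℝ) ^ (k+2) = 4 := by
    rw [← zpow_add₀ (two_ne_zero)]; norm_num
  have hs2 : (0:ℝ) < (2:ℝ)^(k+2) := by positivity
  have hsk : (0:ℝ) < (2:ℝ)^(-(k+2)) := by positivity
  have h1le : (1:ℤ) ≤ 2 ^ t := one_le_pow₀ (by norm_num)
  -- coordinatewise consequences
  have hq1' : ∀ i, (M i : ℝ) * 4 ≤ x i * (2:ℝ)^(k+2) := by
    intro i
    have h := mul_le_mul_of_nonneg_right (hxQ i).1 hs2.le
    calc (M i : ℝ) * 4 = (M i : ℝ) * ((2:ℝ)^(-k) * (2:ℝ)^(k+2)) := by rw [h4]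
      _ = (M i : ℝ) * (2:ℝ)^(-k) * (2:ℝ)^(k+2) := by ring
      _ ≤ x i * (2:ℝ)^(k+2) := h
  have hq2' : ∀ i, x i * (2:ℝ)^(k+2) ≤ ((M i : ℝ) + 1) * 4 := by
    intro i
    have h := mul_le_mul_of_nonneg_right (hxQ i).2 hs2.le
    calc x i * (2:ℝ)^(k+2) ≤ ((M i : ℝ) + 1) * (2:ℝ)^(-k) * (2:ℝ)^(k+2) := h
      _ = ((M i : ℝ) + 1) * ((2:ℝ)^(-k) * (2:ℝ)^(k+2)) := by ring
      _ = ((M i : ℝ) + 1) * 4 := by rw [h4]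
  have hr1' : ∀ i, (m' i : ℝ) * (2:ℝ)^(k+2-k') ≤ x i * (2:ℝ)^(k+2) := by
    intro i
    have h := mul_le_mul_of_nonneg_right (hxR i).1 hs2.le
    calc (m' i : ℝ) * (2:ℝ)^(k+2-k') = (m' i : ℝ) * (2:ℝ)^(-k') * (2:ℝ)^(k+2) := by
          rw [hzadd]; ring
      _ ≤ x i * (2:ℝ)^(k+2) := h
  have hr2' : ∀ i, x i * (2:ℝ)^(k+2) ≤ ((m' i : ℝ) + 1) * (2:ℝ)^(k+2-k') := by
    intro i
    have h := mul_le_mul_of_nonneg_right (hxR i).2 hs2.le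
    calc x i * (2:ℝ)^(k+2) ≤ ((m' i : ℝ) + 1) * (2:ℝ)^(-k') * (2:ℝ)^(k+2) := h
      _ = ((m' i : ℝ) + 1) * (2:ℝ)^(k+2-k') := by rw [hzadd]; ring
  refine ⟨fun i => min ⌊x i * (2:ℝ) ^ (k+2)⌋ ((m' i + 1) * 2 ^ t - 1), fun i => ?_, ?_⟩
  · constructor
    · refine le_min ?_ ?_
      · rw [Int.le_floor]
        push_cast
        linarith [hq1' i]
      · have hZ : ((4 * M i : ℤ) : ℝ) ≤ (((m' i + 1) * 2 ^ t : ℤ) : ℝ) := by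
          push_cast
          rw [h2t']
          linarith [hq1' i, hr2' i]
        have := Int.cast_le.mp hZ
        omega
    · refine (min_le_left _ _).trans ?_
      have h1 : (⌊x i * (2:ℝ) ^ (k+2)⌋ : ℝ) ≤ ((4 * M i + 4 : ℤ) : ℝ) := by
        refine (Int.floor_le _).trans ?_
        push_cast
        linarith [hq2' i]
      exact_mod_cast h1
  · intro y hy i
    obtain ⟨hy1, hy2⟩ := hy i
    simp only [] at hy1 hy2
    have hp_lo : (m' i * 2 ^ t : ℤ) ≤ min ⌊x i * (2:ℝ) ^ (k+2)⌋ ((m' i + 1) * 2 ^ t - 1) := by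
      refine le_min ?_ (by nlinarith)
      rw [Int.le_floor]
      push_cast
      rw [h2t']
      linarith [hr1' i]
    have hp_hi : min ⌊x i * (2:ℝ) ^ (k+2)⌋ ((m' i + 1) * 2 ^ t - 1) ≤ (m' i + 1) * 2 ^ t - 1 :=
      min_le_right _ _
    have hcast_lo : (m' i : ℝ) * (2:ℝ)^(k+2-k')
        ≤ ((min ⌊x i * (2:ℝ) ^ (k+2)⌋ ((m' i + 1) * 2 ^ t - 1) : ℤ) : ℝ) := by
      have : ((m' i * 2 ^ t : ℤ) : ℝ) ≤ ((min ⌊x i * (2:ℝ) ^ (k+2)⌋ ((m' i + 1) * 2 ^ t - 1) : ℤ) : ℝ) := Int.cast_le.mpr hp_lo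
      push_cast at this ⊢
      rw [← h2t']
      linarith
    have hcast_hi : ((min ⌊x i * (2:ℝ) ^ (k+2)⌋ ((m' i + 1) * 2 ^ t - 1) : ℤ) : ℝ) + 1
        ≤ ((m' i : ℝ) + 1) * (2:ℝ)^(k+2-k') := by
      have : ((min ⌊x i * (2:ℝ) ^ (k+2)⌋ ((m' i + 1) * 2 ^ t - 1) : ℤ) : ℝ) ≤ (((m' i + 1) * 2 ^ t - 1 : ℤ) : ℝ) := Int.cast_le.mpr hp_hi
      push_cast at this ⊢
      rw [← h2t']
      linarith
    constructor
    · calc (m' i : ℝ) * (2:ℝ)^(-k')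
          = (m' i : ℝ) * ((2:ℝ)^(k+2-k') * (2:ℝ)^(-(k+2))) := by rw [hzadd2]
        _ = ((m' i : ℝ) * (2:ℝ)^(k+2-k')) * (2:ℝ)^(-(k+2)) := by ring
        _ ≤ ((min ⌊x i * (2:ℝ) ^ (k+2)⌋ ((m' i + 1) * 2 ^ t - 1) : ℤ) : ℝ) * (2:ℝ)^(-(k+2)) :=
            mul_le_mul_of_nonneg_right hcast_lo hsk.le
        _ ≤ y i := hy1
    · calc y i
          ≤ (((min ⌊x i * (2:ℝ) ^ (k+2)⌋ ((m' i + 1) * 2 ^ t - 1) : ℤ) : ℝ) + 1) * (2:ℝ)^(-(k+2)) := hy2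
        _ ≤ (((m' i : ℝ) + 1) * (2:ℝ)^(k+2-k')) * (2:ℝ)^(-(k+2)) :=
            mul_le_mul_of_nonneg_right hcast_hi hsk.le
        _ = ((m' i : ℝ) + 1) * ((2:ℝ)^(k+2-k') * (2:ℝ)^(-(k+2))) := by ring
        _ = ((m' i : ℝ) + 1) * (2:ℝ)^(-k') := by rw [hzadd2]

/-- For a Whitney decomposition of an open set `O ⊊ ℝⁿ` into dyadic cubes with
`diam Q ≤ dist(Q, ∂O) ≤ 4 diam Q`, touching cubes have comparable sizes
(`(1/4) diam Q ≤ diam R ≤ 4 diam Q`) and each cube has at most `12ⁿ` neighbours. -/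
theorem stmt_15 {n : ℕ} (O : Set (EuclideanSpace ℝ (Fin n)))
    (hO : IsOpen O) (hOne : O.Nonempty) (hOproper : O ≠ Set.univ)
    (W : Set (Set (EuclideanSpace ℝ (Fin n))))
    (hdyadic : ∀ Q ∈ W, ∃ k m, Q = dyadicCube n k m)
    (hdisj : ∀ Q ∈ W, ∀ R ∈ W, Q ≠ R → interior Q ∩ interior R = ∅)
    (hcover : ⋃₀ W = O)
    (hwhitney : ∀ Q ∈ W, Metric.diam Q ≤ setDist Q (frontier O) ∧
      setDist Q (frontier O) ≤ 4 * Metric.diam Q) :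
    (∀ Q ∈ W, ∀ R ∈ W, (closure Q ∩ closure R).Nonempty →
      Metric.diam Q ≤ 4 * Metric.diam R ∧ Metric.diam R ≤ 4 * Metric.diam Q) ∧
    ∀ Q ∈ W, {R | R ∈ W ∧ (closure Q ∩ closure R).Nonempty}.Finite ∧
      {R | R ∈ W ∧ (closure Q ∩ closure R).Nonempty}.ncard ≤ 12 ^ n := by
  rcases Nat.eq_zero_or_pos n with hn | hn
  · exfalso
    subst hn
    obtain ⟨w, hw⟩ := hOne
    apply hOproper
    ext z
    simp only [Set.mem_univ, iff_true]
    have : z = w := PiLp.ext fun i => Fin.elim0 i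
    rwa [this]
  have hsn : (0:ℝ) < Real.sqrt n := Real.sqrt_pos.2 (by exact_mod_cast hn)
  have hF : (frontier O).Nonempty := by
    by_contra h
    rw [Set.not_nonempty_iff_eq_empty] at h
    rcases isClopen_iff.mp (isClopen_iff_frontier_eq_empty.mpr h) with h1 | h1
    · exact hOne.ne_empty h1
    · exact hOproper h1
  have key1 : ∀ (k : ℤ) (m : Fin n → ℤ) (k' : ℤ) (m' : Fin n → ℤ),
      dyadicCube n k m ∈ W → dyadicCube n k' m' ∈ W →
      (dyadicCube n k m ∩ dyadicCube n k' m').Nonempty → k' ≤ k + 2 := by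
    rintro k m k' m' hQ hR ⟨x, hxQ, hxR⟩
    have h1 := (hwhitney _ hQ).1
    have h2 := (hwhitney _ hR).2
    have h3 := setDist_le_triangle (Q := dyadicCube n k m) hF (dc_bounded n k' m') hxQ hxR
    rw [dc_diam] at h1
    rw [dc_diam] at h2
    rw [dc_diam] at h3
    have h5 : Real.sqrt n * (2:ℝ)^(-k) ≤ Real.sqrt n * (5 * (2:ℝ)^(-k')) := by linarith
    have h6 : (2:ℝ)^(-k) ≤ 5 * (2:ℝ)^(-k') := le_of_mul_le_mul_left (by linarith) hsn
    by_contra hcon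
    push_neg at hcon
    have h7 : (2:ℝ)^(-k') ≤ (2:ℝ)^(-(k+3)) := by
      apply zpow_le_zpow_right₀ one_le_two (by omega)
    have he : (2:ℝ)^(-(k+3)) * 8 = (2:ℝ)^(-k) := by
      rw [show (8:ℝ) = (2:ℝ)^(3:ℤ) by norm_num, ← zpow_add₀ (two_ne_zero)]
      norm_num
    have hpos : (0:ℝ) < (2:ℝ)^(-k) := by positivity
    nlinarith
  have quarter : ∀ (k k' : ℤ), k' ≤ k + 2 → (2:ℝ)^(-k) ≤ 4 * (2:ℝ)^(-k') := by
    intro k k' hkk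
    have h : (2:ℝ)^(-k) ≤ (2:ℝ)^(2-k') := zpow_le_zpow_right₀ one_le_two (by omega)
    have he : (2:ℝ)^(2-k') = 4 * (2:ℝ)^(-k') := by
      rw [show (2:ℤ)-k' = 2 + -k' by ring, zpow_add₀ (two_ne_zero)]
      norm_num
    linarith [he ▸ h]
  have part1 : ∀ Q ∈ W, ∀ R ∈ W, (closure Q ∩ closure R).Nonempty →
      Metric.diam Q ≤ 4 * Metric.diam R ∧ Metric.diam R ≤ 4 * Metric.diam Q := by
    intro Q hQ R hR hne
    obtain ⟨k, m, rfl⟩ := hdyadic Q hQ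
    obtain ⟨k', m', rfl⟩ := hdyadic R hR
    rw [(dc_closed n k m).closure_eq, (dc_closed n k' m').closure_eq] at hne
    have hk1 := key1 k m k' m' hQ hR hne
    have hk2 := key1 k' m' k m hR hQ (by rwa [Set.inter_comm] at hne)
    rw [dc_diam, dc_diam]
    constructor
    · have := quarter k k' hk1
      nlinarith
    · have := quarter k' k hk2
      nlinarith
  refine ⟨part1, ?_⟩
  intro Q hQ
  obtain ⟨k, M, rfl⟩ := hdyadic Q hQ
  set N := {R | R ∈ W ∧ (closure (dyadicCube n k M) ∩ closure R).Nonempty} with hN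
  have key : ∀ R ∈ N, ∃ p : Fin n → ℤ,
      (∀ i, 4 * M i - 1 ≤ p i ∧ p i ≤ 4 * M i + 4) ∧ dyadicCube n (k + 2) p ⊆ R := by
    rintro R ⟨hRW, hne⟩
    obtain ⟨k', m', rfl⟩ := hdyadic R hRW
    rw [(dc_closed n k M).closure_eq, (dc_closed n k' m').closure_eq] at hne
    obtain ⟨x, hxQ, hxR⟩ := hne
    exact dc_subcube (key1 k M k' m' hQ hRW ⟨x, hxQ, hxR⟩) hxQ hxR
  choose! f hf1 hf2 using key
  have hinj : Set.InjOn f N := by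
    intro R hRN R' hRN' hEq
    by_contra hne
    have h1 := hf2 R hRN
    have h2 := hf2 R' hRN'
    rw [hEq] at h1
    obtain ⟨z, hz⟩ := dc_interior_nonempty n (k+2) (f R')
    have hzz : z ∈ interior R ∩ interior R' := ⟨interior_mono h1 hz, interior_mono h2 hz⟩
    rw [hdisj R hRN.1 R' hRN'.1 hne] at hzz
    exact hzz
  set T : Finset (Fin n → ℤ) :=
    Fintype.piFinset fun i => Finset.Icc (4 * M i - 1) (4 * M i + 4) with hT
  have himg : f '' N ⊆ ↑T := by
    rintro _ ⟨R, hRN, rfl⟩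
    simp only [hT, Finset.coe_sort_coe, Finset.mem_coe, Fintype.mem_piFinset, Finset.mem_Icc]
    exact fun i => ⟨(hf1 R hRN i).1, (hf1 R hRN i).2⟩
  have hfin : N.Finite := Set.Finite.of_finite_image (T.finite_toSet.subset himg) hinj
  refine ⟨hfin, ?_⟩
  calc N.ncard = (f '' N).ncard := (Set.ncard_image_of_injOn hinj).symm
    _ ≤ (↑T : Set (Fin n → ℤ)).ncard := Set.ncard_le_ncard himg T.finite_toSet
    _ = T.card := Set.ncard_coe_finset T
    _ = ∏ i, (Finset.Icc (4 * M i - 1) (4 * M i + 4)).card := Fintype.card_piFinset _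
    _ = 6 ^ n := by
        have h6 : ∀ i : Fin n, (Finset.Icc (4 * M i - 1) (4 * M i + 4)).card = 6 := by
          intro i
          rw [Int.card_Icc]
          omega
        simp [h6]
    _ ≤ 12 ^ n := Nat.pow_le_pow_left (by norm_num) n
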